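/- Let 𝒜 be the heart of a bounded t-structure on a triangulated category 𝒟. Then there is a bijection between torsion theories (𝒯, ℱ) on 𝒜 and t-structures 𝒟'^{≤0} on 𝒟 satisfying 𝒟^{≤0}[1] ⊆ 𝒟'^{≤0} ⊆ 𝒟^{≤0}, given by 𝒟'^{≤0} = {E : H^i(E) = 0 for i > 0 and H^0(E) ∈ 𝒯} and inversely 𝒯 = 𝒜 ∩ 𝒟'^{≤0}. -/

import Mathlib

/-!
STATEMENT 9: Let `𝒜` be the heart of a bounded t-structure on a triangulated category
`𝒟`. There is a bijection between torsion theories `(𝒯, ℱ)` on `𝒜` and t-structures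
`𝒟'^{≤0}` on `𝒟` with `𝒟^{≤0}[1] ⊆ 𝒟'^{≤0} ⊆ 𝒟^{≤0}`, given by
`𝒟'^{≤0} = {E : Hⁱ(E) = 0 for i > 0 and H⁰(E) ∈ 𝒯}` and inversely `𝒯 = 𝒜 ∩ 𝒟'^{≤0}`.

Here `Hⁱ(E) = 0` for `i > 0` means `E ∈ 𝒟^{≤0}`, and for such `E` the condition
`H⁰(E) ∈ 𝒯` means: there is a distinguished triangle `A → E → B → A[1]`
with `A ∈ 𝒟^{≤-1}` and `B ∈ 𝒜` with `B ∈ 𝒯` (so that `B = H⁰(E)`).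
Short exact sequences in the heart are distinguished triangles with all vertices in `𝒜`.
-/

open CategoryTheory CategoryTheory.Limits CategoryTheory.Pretriangulated
  CategoryTheory.Triangulated

universe v u

variable {C : Type u} [Category.{v} C] [Preadditive C] [HasZeroObject C] [HasShift C ℤ]
  [∀ n : ℤ, (shiftFunctor C n).Additive] [Pretriangulated C]

/-- Membership in the heart `𝒜 = 𝒟^{≤0} ∩ 𝒟^{≥0}` of a t-structure. -/
def heartP (t : TStructure C) (E : C) : Prop := t.le 0 E ∧ t.ge 0 E

/-- A t-structure is bounded if every object lies in `𝒟^{≤n} ∩ 𝒟^{≥-n}` for some `n`. -/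
def TStructureIsBounded (t : TStructure C) : Prop :=
  ∀ E : C, ∃ n : ℕ, t.le n E ∧ t.ge (-(n : ℤ)) E

/-- A torsion theory on the heart `𝒜` of a t-structure `t` on a triangulated category:
full subcategories `𝒯, ℱ ⊆ 𝒜` (closed under isomorphism) with `Hom(𝒯,ℱ) = 0` and such
that every `E ∈ 𝒜` fits into a short exact sequence in `𝒜`, i.e. a distinguished
triangle `T → E → F → T[1]` with `T ∈ 𝒯`, `F ∈ ℱ`. -/
structure HeartTorsionTheory (t : TStructure C) where
  tor : C → Prop
  free : C → Prop
  tor_heart : ∀ E, tor E → heartP t E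
  free_heart : ∀ E, free E → heartP t E
  tor_iso : ∀ {X Y : C}, (X ≅ Y) → tor X → tor Y
  free_iso : ∀ {X Y : C}, (X ≅ Y) → free X → free Y
  hom_zero : ∀ {X Y : C} (f : X ⟶ Y), tor X → free Y → f = 0
  exists_triangle : ∀ E : C, heartP t E →
    ∃ (A B : C) (f : A ⟶ E) (g : E ⟶ B) (h : B ⟶ A⟦(1 : ℤ)⟧),
      tor A ∧ free B ∧ Triangle.mk f g h ∈ distTriang C

namespace HRS

open ZeroObject

variable (t : TStructure C)

lemma zero_of_lt {m n : ℤ} (h : m < n) {V W : C} (hV : t.le m V) (hW : t.ge n W)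
    (f : V ⟶ W) : f = 0 := by
  have hV' : t.le 0 (V⟦m⟧) := t.le_shift m m 0 (by omega) V hV
  have hW' : t.ge (n - m) (W⟦m⟧) := t.ge_shift n m (n - m) (by omega) W hW
  have hW'' : t.ge 1 (W⟦m⟧) := t.ge_antitone (by omega) _ hW'
  have : (shiftFunctor C m).map f = 0 := t.zero' _ hV' hW''
  apply (shiftFunctor C m).map_injective
  rw [this, Functor.map_zero]

lemma le_of_isZero (n : ℤ) {X : C} (h : IsZero X) : t.le n X := by
  obtain ⟨A, B, hA, hB, f, g, hco, mem⟩ := t.exists_triangle X n (n + 1) rfl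
  have hiso : IsIso (Triangle.mk f g hco).mor₃ :=
    (Triangle.isZero₂_iff_isIso₃ _ mem).1 h
  have hBz : IsZero B := by
    rw [IsZero.iff_id_eq_zero]
    have hBle : t.le (n - 1) B := (t.le (n - 1)).prop_of_iso
      (@asIso _ _ _ _ (Triangle.mk f g hco).mor₃ hiso).symm (t.le_shift n 1 (n - 1) (by omega) A hA)
    exact zero_of_lt t (by omega : n - 1 < n + 1) hBle hB _
  have hAz : IsZero A := by
    rw [IsZero.iff_id_eq_zero]
    apply (shiftFunctor C (1 : ℤ)).map_injective
    rw [CategoryTheory.Functor.map_id, CategoryTheory.Functor.map_zero]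
    exact (IsZero.iff_id_eq_zero _).1 (hBz.of_iso (@asIso _ _ _ _ (Triangle.mk f g hco).mor₃ hiso).symm)
  exact (t.le n).prop_of_iso (hAz.iso h) hA

lemma ge_of_isZero (n : ℤ) {X : C} (h : IsZero X) : t.ge n X := by
  obtain ⟨A, B, hA, hB, f, g, hco, mem⟩ := t.exists_triangle X (n - 1) n (by omega)
  have hiso : IsIso (Triangle.mk f g hco).mor₃ :=
    (Triangle.isZero₂_iff_isIso₃ _ mem).1 h
  have hBz : IsZero B := by
    rw [IsZero.iff_id_eq_zero]
    have hBle : t.le (n - 2) B := (t.le (n - 2)).prop_of_iso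
      (@asIso _ _ _ _ (Triangle.mk f g hco).mor₃ hiso).symm (t.le_shift (n - 1) 1 (n - 2) (by omega) A hA)
    exact zero_of_lt t (by omega : n - 2 < n) hBle hB _
  exact (t.ge n).prop_of_iso (hBz.iso h) hB

lemma le_iff_orth (n m : ℤ) (hnm : n + 1 = m) (X : C) :
    t.le n X ↔ ∀ W, t.ge m W → ∀ f : X ⟶ W, f = 0 := by
  constructor
  · intro hX W hW f
    exact zero_of_lt t (by omega) hX hW f
  · intro h
    obtain ⟨A, B, hA, hB, f, g, hco, mem⟩ := t.exists_triangle X n m hnm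
    have hg : g = 0 := h B hB g
    have hBz : IsZero B := by
      rw [IsZero.iff_id_eq_zero]
      obtain ⟨k, hk⟩ := Triangle.yoneda_exact₃ _ mem (𝟙 B) (by rw [hg]; exact zero_comp)
      rw [hk, zero_of_lt t (by omega : n - 1 < m)
        (t.le_shift n 1 (n - 1) (by omega) A hA) hB k]; exact comp_zero
    have : IsIso (Triangle.mk f g hco).mor₁ := (Triangle.isZero₃_iff_isIso₁ _ mem).1 hBz
    exact (t.le n).prop_of_iso (@asIso _ _ _ _ (Triangle.mk f g hco).mor₁ this) hA

lemma ge_iff_orth (n m : ℤ) (hnm : m + 1 = n) (W : C) :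
    t.ge n W ↔ ∀ V, t.le m V → ∀ f : V ⟶ W, f = 0 := by
  constructor
  · intro hW V hV f
    exact zero_of_lt t (by omega) hV hW f
  · intro h
    obtain ⟨A, B, hA, hB, f, g, hco, mem⟩ := t.exists_triangle W m n hnm
    have hf : f = 0 := h A hA f
    have hAz : IsZero A := by
      rw [IsZero.iff_id_eq_zero]
      obtain ⟨k, hk⟩ := Triangle.coyoneda_exact₂ _ (inv_rot_of_distTriang _ mem) (𝟙 A)
        (by rw [hf]; exact comp_zero)
      rw [hk, zero_of_lt t (by omega : m < n + 1) hA
        (t.ge_shift n (-1) (n + 1) (by omega) B hB) k]; exact zero_comp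
    have : IsIso (Triangle.mk f g hco).mor₂ := (Triangle.isZero₁_iff_isIso₂ _ mem).1 hAz
    exact (t.ge n).prop_of_iso (@asIso _ _ _ _ (Triangle.mk f g hco).mor₂ this).symm hB

lemma le_ext (n m : ℤ) (hnm : n + 1 = m) {T : Triangle C} (hT : T ∈ distTriang C)
    (h₁ : t.le n T.obj₁) (h₃ : t.le n T.obj₃) : t.le n T.obj₂ := by
  rw [le_iff_orth t n m hnm]
  intro W hW f
  obtain ⟨k, hk⟩ := Triangle.yoneda_exact₂ _ hT f (zero_of_lt t (by omega) h₁ hW _)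
  rw [hk, zero_of_lt t (by omega) h₃ hW k]; exact comp_zero

lemma ge_ext (n m : ℤ) (hnm : m + 1 = n) {T : Triangle C} (hT : T ∈ distTriang C)
    (h₁ : t.ge n T.obj₁) (h₃ : t.ge n T.obj₃) : t.ge n T.obj₂ := by
  rw [ge_iff_orth t n m hnm]
  intro V hV f
  obtain ⟨k, hk⟩ := Triangle.coyoneda_exact₂ _ hT f (zero_of_lt t (by omega) hV h₃ _)
  rw [hk, zero_of_lt t (by omega) hV h₁ k]; exact zero_comp

section TorsionLemmas

variable {t : TStructure C} (tt : HeartTorsionTheory t)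

/-- The new aisle predicate. -/
def torP (E : C) : Prop := t.le 0 E ∧
  ∃ (A B : C) (f : A ⟶ E) (g : E ⟶ B) (h : B ⟶ A⟦(1 : ℤ)⟧),
    t.le (-1) A ∧ heartP t B ∧ tt.tor B ∧ Triangle.mk f g h ∈ distTriang C

lemma torP_iso {E E' : C} (e : E ≅ E') (hE : torP tt E) : torP tt E' := by
  obtain ⟨h0, A, B, f, g, h, hA, hB, hT, mem⟩ := hE
  refine ⟨(t.le 0).prop_of_iso e h0, A, B, f ≫ e.hom, e.inv ≫ g, h, hA, hB, hT, ?_⟩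
  refine isomorphic_distinguished _ mem _ ?_
  exact Triangle.isoMk _ _ (Iso.refl A) e.symm (Iso.refl B) (by simp [Triangle.mk]) (by simp [Triangle.mk]) (by simp [Triangle.mk])

lemma tor_of_isZero {X : C} (h : IsZero X) : tt.tor X := by
  obtain ⟨T, F, s, r, z, hT, hF, mem⟩ :=
    tt.exists_triangle X ⟨le_of_isZero t 0 h, ge_of_isZero t 0 h⟩
  have hr : r = 0 := h.eq_of_src _ _
  have hFz : IsZero F := by
    rw [IsZero.iff_id_eq_zero]
    obtain ⟨k, hk⟩ := Triangle.yoneda_exact₃ _ mem (𝟙 F) (by rw [hr]; exact zero_comp)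
    rw [hk, zero_of_lt t (by omega : (-1 : ℤ) < 0)
      (t.le_shift 0 1 (-1) (by omega) T (tt.tor_heart T hT).1) (tt.free_heart F hF).2 k]
    exact comp_zero
  have : IsIso (Triangle.mk s r z).mor₁ := (Triangle.isZero₃_iff_isIso₁ _ mem).1 hFz
  exact tt.tor_iso (@asIso _ _ _ _ (Triangle.mk s r z).mor₁ this) hT

lemma free_of_isZero {X : C} (h : IsZero X) : tt.free X := by
  obtain ⟨T, F, s, r, z, hT, hF, mem⟩ :=
    tt.exists_triangle X ⟨le_of_isZero t 0 h, ge_of_isZero t 0 h⟩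
  have hs : s = 0 := h.eq_of_tgt _ _
  have hTz : IsZero T := by
    rw [IsZero.iff_id_eq_zero]
    obtain ⟨k, hk⟩ := Triangle.coyoneda_exact₂ _ (inv_rot_of_distTriang _ mem) (𝟙 T)
      (by rw [hs]; exact comp_zero)
    rw [hk, zero_of_lt t (by omega : (0 : ℤ) < 1) (tt.tor_heart T hT).1
      (t.ge_shift 0 (-1) 1 (by omega) F (tt.free_heart F hF).2) k]; exact zero_comp
  have : IsIso (Triangle.mk s r z).mor₂ := (Triangle.isZero₁_iff_isIso₂ _ mem).1 hTz
  exact tt.free_iso (@asIso _ _ _ _ (Triangle.mk s r z).mor₂ this).symm hF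

lemma torP_of_le_neg {E : C} (hE : t.le (-1) E) : torP tt E := by
  refine ⟨t.le_monotone (by omega : (-1 : ℤ) ≤ 0) _ hE, E, 0, 𝟙 E, 0, 0, hE,
    ⟨le_of_isZero t 0 (isZero_zero C), ge_of_isZero t 0 (isZero_zero C)⟩,
    tor_of_isZero tt (isZero_zero C), contractible_distinguished E⟩

lemma torP_of_tor {E : C} (hE : tt.tor E) : torP tt E := by
  refine ⟨(tt.tor_heart E hE).1, 0, E, 0, 𝟙 E, 0,
    le_of_isZero t (-1) (isZero_zero C), tt.tor_heart E hE, hE,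
    contractible_distinguished₁ E⟩

lemma hom_to_free_zero {V F : C} (hV : torP tt V) (hF : tt.free F) (φ : V ⟶ F) : φ = 0 := by
  obtain ⟨h0, A, B, f, g, h, hA, hB, hT, mem⟩ := hV
  obtain ⟨k, hk⟩ := Triangle.yoneda_exact₂ _ mem φ
    (zero_of_lt t (by omega : (-1 : ℤ) < 0) hA (tt.free_heart F hF).2 _)
  rw [hk, tt.hom_zero k hT hF]; exact comp_zero

end TorsionLemmas

section Decomp

variable {t : TStructure C} (tt : HeartTorsionTheory t)

lemma exists_decomp (E : C) :
    ∃ (X Z : C) (f : X ⟶ E) (g : E ⟶ Z) (h : Z ⟶ X⟦(1 : ℤ)⟧),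
      torP tt X ∧ (∀ V, torP tt V → ∀ φ : V ⟶ Z, φ = 0) ∧
      Triangle.mk f g h ∈ distTriang C := by
  obtain ⟨X₀, Y₀, hX₀, hY₀, aE, d, δE, memE⟩ := t.exists_triangle E 0 1 (by omega)
  obtain ⟨A, H, hA, hH0, u, v, w, memH⟩ := t.exists_triangle X₀ (-1) 0 (by omega)
  have hA1 : t.le 0 (A⟦(1 : ℤ)⟧) :=
    t.le_monotone (by omega : (-2 : ℤ) ≤ 0) _ (t.le_shift (-1) 1 (-2) (by omega) A hA)
  have hHheart : heartP t H :=
    ⟨le_ext t 0 1 (by omega) (rot_of_distTriang _ memH) hX₀ hA1, hH0⟩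
  obtain ⟨T, F, s, r, z, hT, hF, memF⟩ := tt.exists_triangle H hHheart
  obtain ⟨X, x, δq, memX⟩ := distinguished_cocone_triangle₁ (v ≫ r)
  -- the key orthogonality property of X
  have key : ∀ (W : C), t.ge 0 W → (t.ge 1 W ∨ tt.free W) → ∀ g : X ⟶ W, g = 0 := by
    intro W hW0 hc g
    have hW1 : t.ge (-1) (W⟦(1 : ℤ)⟧) := t.ge_shift 0 1 (-1) (by omega) W hW0
    -- any map F⟦-1⟧ ⟶ W vanishing after precomposition with (v ≫ r)⟦-1⟧ is zero
    have phiz : ∀ φ : F⟦(-1 : ℤ)⟧ ⟶ W,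
        (shiftFunctor C (-1 : ℤ)).map (v ≫ r) ≫ φ = 0 → φ = 0 := by
      intro φ hφ
      set ν := shiftFunctorCompIsoId C (-1 : ℤ) (1 : ℤ) (by omega) with hν
      set ψ : F ⟶ W⟦(1 : ℤ)⟧ := ν.inv.app F ≫ (shiftFunctor C (1 : ℤ)).map φ with hψ
      have hnat' := ν.inv.naturality (v ≫ r)
      simp only [Functor.id_map, Functor.comp_map] at hnat'
      have hqψ : (v ≫ r) ≫ ψ = 0 := by
        rw [hψ, ← Category.assoc, hnat', Category.assoc,
          ← CategoryTheory.Functor.map_comp, hφ, CategoryTheory.Functor.map_zero, comp_zero]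
      have hrψ : r ≫ ψ = 0 := by
        obtain ⟨k, hk⟩ : ∃ k : A⟦(1 : ℤ)⟧ ⟶ W⟦(1 : ℤ)⟧, r ≫ ψ = w ≫ k :=
          Triangle.yoneda_exact₃ _ memH (r ≫ ψ)
          (by exact (by rw [← Category.assoc]; exact hqψ : v ≫ r ≫ ψ = 0))
        rw [hk, zero_of_lt t (by omega : (-2 : ℤ) < -1)
          (t.le_shift (-1) 1 (-2) (by omega) A hA) hW1 k]; exact comp_zero
      obtain ⟨k₂, hk₂⟩ := Triangle.yoneda_exact₃ _ memF ψ hrψ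
      have hk₂0 : k₂ = 0 := by
        rcases hc with hge | hfree
        · exact zero_of_lt t (by omega : (-1 : ℤ) < 0)
            (t.le_shift 0 1 (-1) (by omega) T (tt.tor_heart T hT).1)
            (t.ge_shift 1 1 0 (by omega) W hge) k₂
        · set μ := shiftFunctorCompIsoId C (1 : ℤ) (-1 : ℤ) (by omega) with hμ
          apply (shiftFunctor C (-1 : ℤ)).map_injective
          have hk' : μ.inv.app T ≫ (shiftFunctor C (-1 : ℤ)).map k₂ ≫ μ.hom.app W = 0 :=
            tt.hom_zero _ hT hfree
          rw [CategoryTheory.Functor.map_zero]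
          have hcg := congrArg (fun m => μ.hom.app T ≫ m ≫ μ.inv.app W) hk'
          simp at hcg; exact hcg
      have hψ0 : ψ = 0 := by rw [hk₂, hk₂0]; exact comp_zero
      have : (shiftFunctor C (1 : ℤ)).map φ = 0 := by
        have h6 := hψ0
        rw [hψ] at h6
        have h7 := congrArg (fun m => ν.hom.app F ≫ m) h6
        simpa using h7
      apply (shiftFunctor C (1 : ℤ)).map_injective
      rw [this, CategoryTheory.Functor.map_zero]
    -- conclude using the inv-rotated triangle of X → X₀ → F
    have hmor : ((Triangle.mk x (v ≫ r) δq).invRotate).mor₁ ≫ g = 0 := by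
      dsimp [Triangle.invRotate]
      have h0 : (shiftFunctor C (-1 : ℤ)).map δq ≫
          ((shiftEquiv C (1 : ℤ)).unitIso.inv.app X ≫ g) = 0 := by
        apply phiz
        rw [← Functor.map_comp_assoc]
        have : (v ≫ r) ≫ δq = 0 := comp_distTriang_mor_zero₂₃ _ memX
        rw [this, CategoryTheory.Functor.map_zero, zero_comp]
      change (-(shiftFunctor C (-1 : ℤ)).map δq ≫
        (shiftFunctorCompIsoId C (1 : ℤ) (-1) (by omega)).hom.app X) ≫ g = 0
      simpa using h0
    obtain ⟨k, hk⟩ := Triangle.yoneda_exact₂ _ (inv_rot_of_distTriang _ memX) g hmor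
    -- hk : g = x ≫ k with k : X₀ ⟶ W
    rcases hc with hge | hfree
    · rw [hk]
      rw [zero_of_lt t (by omega : (0 : ℤ) < 1) hX₀ hge k]; exact comp_zero
    · have huk : u ≫ k = 0 := zero_of_lt t (by omega : (-1 : ℤ) < 0) hA hW0 _
      obtain ⟨k', hk'⟩ : ∃ k' : H ⟶ W, k = v ≫ k' := Triangle.yoneda_exact₂ _ memH k huk
      obtain ⟨k'', hk''⟩ : ∃ k'' : F ⟶ W, k' = r ≫ k'' := Triangle.yoneda_exact₂ _ memF k' (tt.hom_zero _ hT hfree)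
      have h5 : x ≫ (v ≫ r) = 0 := comp_distTriang_mor_zero₁₂ _ memX
      rw [hk, hk', hk'']
      change x ≫ v ≫ r ≫ k'' = 0
      rw [← Category.assoc, ← Category.assoc, Category.assoc x v r, h5, zero_comp]
  -- X is in the new aisle
  have hLEX : t.le 0 X := (le_iff_orth t 0 1 (by omega) X).2
    (fun W hW f => key W (t.ge_antitone (by omega) _ hW) (Or.inl hW) f)
  obtain ⟨A₂, H₂, hA₂, hH₂0, u₂, v₂, w₂, mem₂⟩ := t.exists_triangle X (-1) 0 (by omega)
  have hA₂1 : t.le 0 (A₂⟦(1 : ℤ)⟧) :=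
    t.le_monotone (by omega : (-2 : ℤ) ≤ 0) _ (t.le_shift (-1) 1 (-2) (by omega) A₂ hA₂)
  have hH₂heart : heartP t H₂ :=
    ⟨le_ext t 0 1 (by omega) (rot_of_distTriang _ mem₂) hLEX hA₂1, hH₂0⟩
  obtain ⟨T₂, F₂, s₂, r₂, z₂, hT₂, hF₂, memF₂⟩ := tt.exists_triangle H₂ hH₂heart
  have hvr₂ : v₂ ≫ r₂ = 0 := key F₂ (tt.free_heart _ hF₂).2 (Or.inr hF₂) (v₂ ≫ r₂)
  have hr₂ : r₂ = 0 := by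
    obtain ⟨k, hk⟩ := Triangle.yoneda_exact₃ _ mem₂ r₂ hvr₂
    rw [hk, zero_of_lt t (by omega : (-2 : ℤ) < 0)
      (t.le_shift (-1) 1 (-2) (by omega) A₂ hA₂) (tt.free_heart F₂ hF₂).2 k]; exact comp_zero
  have hF₂z : IsZero F₂ := by
    rw [IsZero.iff_id_eq_zero]
    obtain ⟨k, hk⟩ := Triangle.yoneda_exact₃ _ memF₂ (𝟙 F₂)
      (by rw [hr₂]; exact zero_comp)
    rw [hk, zero_of_lt t (by omega : (-1 : ℤ) < 0)
      (t.le_shift 0 1 (-1) (by omega) T₂ (tt.tor_heart T₂ hT₂).1)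
      (tt.free_heart F₂ hF₂).2 k]; exact comp_zero
  have hs₂ : IsIso (Triangle.mk s₂ r₂ z₂).mor₁ := (Triangle.isZero₃_iff_isIso₁ _ memF₂).1 hF₂z
  have htorH₂ : tt.tor H₂ := tt.tor_iso (@asIso _ _ _ _ (Triangle.mk s₂ r₂ z₂).mor₁ hs₂) hT₂
  have htorX : torP tt X := ⟨hLEX, A₂, H₂, u₂, v₂, w₂, hA₂, hH₂heart, htorH₂, mem₂⟩
  -- construct Z
  obtain ⟨Z, e, δ, memZ⟩ := distinguished_cocone_triangle (x ≫ aE)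
  obtain ⟨ρ, hρ₁, hρ₂⟩ : ∃ ρ : F ⟶ Z, (v ≫ r) ≫ ρ = aE ≫ e ∧
      δq ≫ (shiftFunctor C (1 : ℤ)).map (𝟙 X) = ρ ≫ δ := complete_distinguished_triangle_morphism
    (Triangle.mk x (v ≫ r) δq) (Triangle.mk (x ≫ aE) e δ) memX memZ (𝟙 X) aE (by simp [Triangle.mk])
  obtain ⟨p', hp₁, hp₂⟩ : ∃ p' : Z ⟶ Y₀, e ≫ p' = 𝟙 E ≫ d ∧
      δ ≫ (shiftFunctor C (1 : ℤ)).map x = p' ≫ δE := complete_distinguished_triangle_morphism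
    (Triangle.mk (x ≫ aE) e δ) (Triangle.mk aE d δE) memZ memE x (𝟙 E) (by simp [Triangle.mk])
  simp only [Functor.map_id, Category.comp_id, Category.id_comp] at hρ₂ hp₁
  have orth : ∀ V, torP tt V → ∀ φ : V ⟶ Z, φ = 0 := by
    intro V hV φ
    have h1 : φ ≫ p' = 0 := zero_of_lt t (by omega : (0 : ℤ) < 1) hV.1 hY₀ _
    have h2 : (φ ≫ δ) ≫ (shiftFunctor C (1 : ℤ)).map x = 0 := by
      rw [Category.assoc, hp₂, ← Category.assoc, h1, zero_comp]
    obtain ⟨k₅, hk₅⟩ : ∃ k₅ : V ⟶ F, φ ≫ δ = k₅ ≫ δq :=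
      Triangle.coyoneda_exact₃ _ (rot_of_distTriang _ memX) (φ ≫ δ)
      (by exact (by rw [Preadditive.comp_neg, h2, neg_zero] :
        (φ ≫ δ) ≫ (-(shiftFunctor C (1 : ℤ)).map x) = 0))
    have hk₅0 : k₅ = 0 := hom_to_free_zero tt hV hF k₅
    have h3 : φ ≫ δ = 0 := by rw [hk₅, hk₅0, zero_comp]
    obtain ⟨k₆, hk₆⟩ : ∃ k₆ : V ⟶ E, φ = k₆ ≫ e := Triangle.coyoneda_exact₃ _ memZ φ h3
    have h4 : k₆ ≫ d = 0 := zero_of_lt t (by omega : (0 : ℤ) < 1) hV.1 hY₀ _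
    obtain ⟨k₇, hk₇⟩ : ∃ k₇ : V ⟶ X₀, k₆ = k₇ ≫ aE := Triangle.coyoneda_exact₂ _ memE k₆ h4
    rw [hk₆, hk₇, Category.assoc, ← hρ₁, ← Category.assoc]
    rw [hom_to_free_zero tt hV hF (k₇ ≫ (v ≫ r)), zero_comp]
  exact ⟨X, Z, x ≫ aE, e, δ, htorX, orth, memZ⟩

end Decomp

section Construction

variable {t : TStructure C} (tt : HeartTorsionTheory t)

/-- Transport `torP` through the `E⟦0⟧ ≅ E` isomorphism. -/
lemma torP_shift_zero_iff (E : C) : torP tt (E⟦(0 : ℤ)⟧) ↔ torP tt E :=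
  ⟨fun h => torP_iso tt ((shiftFunctorZero C ℤ).app E) h,
   fun h => torP_iso tt ((shiftFunctorZero C ℤ).app E).symm h⟩

/-- The t-structure associated with a torsion theory on the heart. -/
def ofTorsion : TStructure C where
  le n E := torP tt (E⟦n⟧)
  ge n E := ∀ V : C, torP tt (V⟦n - 1⟧) → ∀ f : V ⟶ E, f = 0
  le_isClosedUnderIsomorphisms n := ⟨fun e hX =>
    torP_iso tt ((shiftFunctor C n).mapIso e) hX⟩
  ge_isClosedUnderIsomorphisms n := ⟨fun e hX V hV f => by
    have : (f ≫ e.inv) ≫ e.hom = f := by simp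
    rw [← this, hX V hV (f ≫ e.inv), zero_comp]⟩
  le_shift n a n' h X hX :=
    torP_iso tt ((shiftFunctorAdd' C a n' n h).app X) hX
  ge_shift n a n' h X hX := by
    intro V hV f
    have hV' : torP tt ((V⟦(-a : ℤ)⟧)⟦n - 1⟧) :=
      torP_iso tt ((shiftFunctorAdd' C (-a) (n - 1) (n' - 1) (by omega)).app V) hV
    have h0 : (shiftFunctor C (-a)).map f ≫
        (shiftFunctorCompIsoId C a (-a) (by omega)).hom.app X = 0 :=
      hX (V⟦(-a : ℤ)⟧) hV' _
    apply (shiftFunctor C (-a)).map_injective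
    rw [CategoryTheory.Functor.map_zero]
    have h7 := congrArg (fun m => m ≫ (shiftFunctorCompIsoId C a (-a) (by omega)).inv.app X) h0
    simpa using h7
  zero' {X Y} f hX hY := by
    refine hY X ?_ f
    have h1 : (1 : ℤ) - 1 = 0 := by omega
    rw [h1]
    exact hX
  le_zero_le X hX := by
    have hX' : torP tt X := (torP_shift_zero_iff tt X).1 hX
    exact torP_of_le_neg tt (t.le_shift 0 1 (-1) (by omega) X hX'.1)
  ge_one_le X hX := by
    intro V hV f
    refine hX V ?_ f
    have h1 : (1 : ℤ) - 1 = 0 := by omega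
    have h0 : (0 : ℤ) - 1 = -1 := by omega
    rw [h1]
    rw [h0] at hV
    refine (torP_shift_zero_iff tt V).2 ?_
    exact torP_iso tt ((shiftFunctorCompIsoId C (-1 : ℤ) (1 : ℤ) (by omega)).app V)
      (torP_of_le_neg tt (t.le_shift 0 1 (-1) (by omega) _ hV.1))
  exists_triangle_zero_one E := by
    obtain ⟨X, Z, f, g, h, hX, orth, mem⟩ := exists_decomp tt E
    refine ⟨X, Z, (torP_shift_zero_iff tt X).2 hX, ?_, f, g, h, mem⟩
    intro V hV φ
    have h1 : (1 : ℤ) - 1 = 0 := by omega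
    rw [h1] at hV
    exact orth V ((torP_shift_zero_iff tt V).1 hV) φ

lemma ofTorsion_le_zero_iff (E : C) : (ofTorsion tt).le 0 E ↔ torP tt E :=
  torP_shift_zero_iff tt E

lemma ofTorsion_interm :
    (∀ E : C, t.le (-1) E → (ofTorsion tt).le 0 E) ∧
      (∀ E : C, (ofTorsion tt).le 0 E → t.le 0 E) :=
  ⟨fun E hE => (ofTorsion_le_zero_iff tt E).2 (torP_of_le_neg tt hE),
   fun E hE => ((ofTorsion_le_zero_iff tt E).1 hE).1⟩

end Construction

section Backward

variable {t : TStructure C}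

/-- The torsion theory associated with an intermediate t-structure. -/
def toTorsion (t' : TStructure C) (h₁ : ∀ E : C, t.le (-1) E → t'.le 0 E)
    (h₂ : ∀ E : C, t'.le 0 E → t.le 0 E) : HeartTorsionTheory t where
  tor E := heartP t E ∧ t'.le 0 E
  free E := heartP t E ∧ t'.ge 1 E
  tor_heart _ h := h.1
  free_heart _ h := h.1
  tor_iso e h := ⟨⟨(t.le 0).prop_of_iso e h.1.1, (t.ge 0).prop_of_iso e h.1.2⟩,
    (t'.le 0).prop_of_iso e h.2⟩
  free_iso e h := ⟨⟨(t.le 0).prop_of_iso e h.1.1, (t.ge 0).prop_of_iso e h.1.2⟩,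
    (t'.ge 1).prop_of_iso e h.2⟩
  hom_zero f hX hY := t'.zero' f hX.2 hY.2
  exists_triangle E hE := by
    obtain ⟨A, B, hA, hB, f, g, h, mem⟩ := t'.exists_triangle_zero_one E
    have hBge : t.ge 0 B := (ge_iff_orth t 0 (-1) (by omega) B).2
      (fun V hV φ => t'.zero' φ (h₁ V hV) hB)
    have hBneg : t.ge 0 ((shiftFunctor C (-1 : ℤ)).obj B) :=
      t.ge_antitone (by omega : (0 : ℤ) ≤ 1) _ (t.ge_shift 0 (-1) 1 (by omega) B hBge)
    have hAheart : heartP t A := ⟨h₂ A hA,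
      ge_ext t 0 (-1) (by omega) (inv_rot_of_distTriang _ mem) hBneg hE.2⟩
    have hA1 : t.le 0 ((shiftFunctor C (1 : ℤ)).obj A) :=
      t.le_monotone (by omega : (-1 : ℤ) ≤ 0) _ (t.le_shift 0 1 (-1) (by omega) A hAheart.1)
    have hBheart : heartP t B :=
      ⟨le_ext t 0 1 (by omega) (rot_of_distTriang _ mem) hE.1 hA1, hBge⟩
    exact ⟨A, B, f, g, h, ⟨hAheart, hA⟩, ⟨hBheart, hB⟩, mem⟩

lemma tor_iff_of (tt : HeartTorsionTheory t) (E : C) :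
    tt.tor E ↔ (heartP t E ∧ (ofTorsion tt).le 0 E) := by
  constructor
  · intro h
    exact ⟨tt.tor_heart E h, (ofTorsion_le_zero_iff tt E).2 (torP_of_tor tt h)⟩
  · rintro ⟨hH, hLE⟩
    obtain ⟨h0, A, B, f, g, h, hA, hB, hT, mem⟩ := (ofTorsion_le_zero_iff tt E).1 hLE
    have hf : f = 0 := zero_of_lt t (by omega : (-1 : ℤ) < 0) hA hH.2 f
    have hAz : IsZero A := by
      rw [IsZero.iff_id_eq_zero]
      obtain ⟨k, hk⟩ := Triangle.coyoneda_exact₂ _ (inv_rot_of_distTriang _ mem) (𝟙 A)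
        (by rw [hf]; exact comp_zero)
      rw [hk, zero_of_lt t (by omega : (-1 : ℤ) < 1) hA
        (t.ge_shift 0 (-1) 1 (by omega) B hB.2) k]; exact zero_comp
    have hA1z : IsZero ((shiftFunctor C (1 : ℤ)).obj A) := by
      rw [IsZero.iff_id_eq_zero, ← CategoryTheory.Functor.map_id,
        (IsZero.iff_id_eq_zero A).1 hAz, CategoryTheory.Functor.map_zero]
    have hg : IsIso g := (Triangle.isZero₃_iff_isIso₁ _
      (rot_of_distTriang _ mem)).1 hA1z
    exact tt.tor_iso (asIso g).symm hT

lemma free_iff_of (tt : HeartTorsionTheory t) (E : C) :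
    tt.free E ↔ (heartP t E ∧ (ofTorsion tt).ge 1 E) := by
  have h1 : (1 : ℤ) - 1 = 0 := by omega
  constructor
  · intro h
    refine ⟨tt.free_heart E h, ?_⟩
    intro V hV f
    rw [h1] at hV
    exact hom_to_free_zero tt ((torP_shift_zero_iff tt V).1 hV) h f
  · rintro ⟨hH, hGE⟩
    obtain ⟨T, F, s, r, z, hT, hF, mem⟩ := tt.exists_triangle E hH
    have hs : s = 0 := by
      refine hGE T ?_ s
      rw [h1]
      exact (torP_shift_zero_iff tt T).2 (torP_of_tor tt hT)
    have hTz : IsZero T := by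
      rw [IsZero.iff_id_eq_zero]
      obtain ⟨k, hk⟩ := Triangle.coyoneda_exact₂ _ (inv_rot_of_distTriang _ mem) (𝟙 T)
        (by rw [hs]; exact comp_zero)
      rw [hk, zero_of_lt t (by omega : (0 : ℤ) < 1) (tt.tor_heart T hT).1
        (t.ge_shift 0 (-1) 1 (by omega) F (tt.free_heart F hF).2) k]; exact zero_comp
    have hr : IsIso r := (Triangle.isZero₁_iff_isIso₂ _ mem).1 hTz
    exact tt.free_iso (asIso r).symm hF

lemma torP_toTorsion_iff (t' : TStructure C) (h₁ : ∀ E : C, t.le (-1) E → t'.le 0 E)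
    (h₂ : ∀ E : C, t'.le 0 E → t.le 0 E) (V : C) :
    torP (toTorsion t' h₁ h₂) V ↔ t'.le 0 V := by
  constructor
  · rintro ⟨h0, A, B, f, g, h, hA, hB, hT, mem⟩
    exact le_ext t' 0 1 (by omega) mem (h₁ A hA) hT.2
  · intro hV
    refine ⟨h₂ V hV, ?_⟩
    obtain ⟨A, H, hA, hH0, u, v, w, mem⟩ := t.exists_triangle V (-1) 0 (by omega)
    have hA1 : t.le 0 ((shiftFunctor C (1 : ℤ)).obj A) :=
      t.le_monotone (by omega : (-2 : ℤ) ≤ 0) _ (t.le_shift (-1) 1 (-2) (by omega) A hA)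
    have hHheart : heartP t H :=
      ⟨le_ext t 0 1 (by omega) (rot_of_distTriang _ mem) (h₂ V hV) hA1, hH0⟩
    have hA1' : t'.le 0 ((shiftFunctor C (1 : ℤ)).obj A) :=
      h₁ _ (t.le_monotone (by omega : (-2 : ℤ) ≤ -1) _ (t.le_shift (-1) 1 (-2) (by omega) A hA))
    have hH' : t'.le 0 H := le_ext t' 0 1 (by omega) (rot_of_distTriang _ mem) hV hA1'
    exact ⟨A, H, u, v, w, hA, hHheart, ⟨hHheart, hH'⟩, mem⟩

lemma tstructure_ext {a b : TStructure C} (hLE : a.le = b.le) (hGE : a.ge = b.ge) : a = b := by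
  cases a; cases b
  cases hLE; cases hGE
  rfl

lemma htt_ext {a b : HeartTorsionTheory t} (h1 : a.tor = b.tor) (h2 : a.free = b.free) :
    a = b := by
  cases a; cases b
  cases h1; cases h2
  rfl

lemma ofTorsion_toTorsion (t' : TStructure C) (h₁ : ∀ E : C, t.le (-1) E → t'.le 0 E)
    (h₂ : ∀ E : C, t'.le 0 E → t.le 0 E) :
    ofTorsion (toTorsion t' h₁ h₂) = t' := by
  have hle : ∀ (n : ℤ) (E : C), (ofTorsion (toTorsion t' h₁ h₂)).le n E ↔ t'.le n E := by
    intro n E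
    have e1 : (ofTorsion (toTorsion t' h₁ h₂)).le n E ↔ t'.le 0 (E⟦n⟧) :=
      torP_toTorsion_iff t' h₁ h₂ (E⟦n⟧)
    rw [e1]
    have e2 : (t'.le 0).shift n E ↔ t'.le n E := by
      rw [t'.shift_le n 0 n (by omega)]
    exact e2
  apply tstructure_ext
  · funext n E
    exact propext (hle n E)
  · funext n E
    apply propext
    constructor
    · intro hE
      rw [ge_iff_orth t' n (n - 1) (by omega) E]
      intro V hV f
      refine hE V ?_ f
      refine (torP_toTorsion_iff t' h₁ h₂ _).2 ?_
      have hps : (t'.le 0).shift (n - 1) V := by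
        rw [t'.shift_le (n - 1) 0 (n - 1) (by omega)]
        exact hV
      exact hps
    · intro hE V hV f
      have hps : (t'.le 0).shift (n - 1) V := (torP_toTorsion_iff t' h₁ h₂ _).1 hV
      rw [t'.shift_le (n - 1) 0 (n - 1) (by omega)] at hps
      have hV' : t'.le (n - 1) V := hps
      exact zero_of_lt t' (by omega : n - 1 < n) hV' hE f
end Backward

end HRS

theorem torsion_theories_biject_with_intermediate_tstructures
    (t : TStructure C) (hb : TStructureIsBounded t) :
    ∃ e : HeartTorsionTheory t ≃
        {t' : TStructure C //
          (∀ E : C, t.le (-1) E → t'.le 0 E) ∧ (∀ E : C, t'.le 0 E → t.le 0 E)},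
      -- the forward map is 𝒟'^{≤0} = {E : Hⁱ(E)=0 for i>0 and H⁰(E) ∈ 𝒯}
      (∀ (tt : HeartTorsionTheory t) (E : C),
        (e tt).1.le 0 E ↔ (t.le 0 E ∧
          ∃ (A B : C) (f : A ⟶ E) (g : E ⟶ B) (h : B ⟶ A⟦(1 : ℤ)⟧),
            t.le (-1) A ∧ heartP t B ∧ tt.tor B ∧ Triangle.mk f g h ∈ distTriang C)) ∧
      -- the inverse map is 𝒯 = 𝒜 ∩ 𝒟'^{≤0}
      (∀ (tt : HeartTorsionTheory t) (E : C),
        tt.tor E ↔ (heartP t E ∧ (e tt).1.le 0 E)) := by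
  refine ⟨⟨fun tt => ⟨HRS.ofTorsion tt, HRS.ofTorsion_interm tt⟩,
      fun p => HRS.toTorsion p.1 p.2.1 p.2.2, fun tt => ?_, fun p => ?_⟩, ?_, ?_⟩
  · apply HRS.htt_ext
    · funext E
      exact propext (HRS.tor_iff_of tt E).symm
    · funext E
      exact propext (HRS.free_iff_of tt E).symm
  · exact Subtype.ext (HRS.ofTorsion_toTorsion p.1 p.2.1 p.2.2)
  · intro tt E
    exact HRS.ofTorsion_le_zero_iff tt E
  · intro tt E
    exact HRS.tor_iff_of tt E
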